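/- Fix r > 0 and define G : (0,∞) → ℝ by G(a) = (1/(2r)) ∫_{−∞}^{a} exp(−(u² + 1)/(4r)) du + (1/(2r)) ∫_0^1 exp(−(a² + 2ax + 1)/(4r)) dx. Then (i) lim_{a→∞} G(a) = (1/(2r)) ∫_{−∞}^{∞} exp(−(x² + 1)/(4r)) dx = √(π/r)·e^{−1/(4r)}, and (ii) there exists a₀ > 0 such that G′(a) < 0 for all a ≥ a₀, i.e. G is strictly decreasing on [a₀, ∞). -/

import Mathlib

open MeasureTheory Set

/-- The F-functional of the capped half-cylinder at scale r, centered at the axis point at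
distance a inside the cylinder from the cap center, as a one-dimensional integral. -/
noncomputable def G (r a : ℝ) : ℝ :=
  (1 / (2 * r)) * (∫ u in Set.Iic a, Real.exp (-(u ^ 2 + 1) / (4 * r))) +
  (1 / (2 * r)) * ∫ x in (0:ℝ)..1, Real.exp (-(a ^ 2 + 2 * a * x + 1) / (4 * r))

theorem aux_cubic_le_exp {x : ℝ} (hx : 0 ≤ x) : 1 + x + x^2/2 + x^3/6 ≤ Real.exp x := by
  have := Real.sum_le_exp_of_nonneg hx 4
  simp [Finset.sum_range_succ, Nat.factorial] at this
  linarith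

theorem aux_key_ineq (r a : ℝ) (hr : 0 < r) (ha1 : 1 ≤ a) (ha2 : 25 * r^2 ≤ a) :
    1 + (2*a^2+2*a)/(4*r) < Real.exp (a/(2*r)) := by
  have h := aux_cubic_le_exp (x := a/(2*r)) (by positivity)
  have h3 : a^2/(2*r) < (a/(2*r))^3/6 := by
    rw [div_pow, div_div, div_lt_div_iff₀ (by positivity) (by positivity)]
    have ha : (0:ℝ) < a := lt_of_lt_of_le one_pos ha1
    nlinarith [mul_le_mul_of_nonneg_left ha2 (mul_nonneg (sq_nonneg a) hr.le),
      mul_pos (mul_pos (pow_pos ha 2) hr) (mul_pos hr hr)]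
  have heq : (2*a^2+2*a)/(4*r) = a^2/(2*r) + a/(2*r) := by field_simp; ring
  have ht2 : 0 ≤ (a/(2*r))^2/2 := by positivity
  rw [heq]; linarith

/-- (i) G(a) tends, as a → ∞, to the F-functional value (1/(2r))∫_ℝ e^{−(x²+1)/(4r)} dx
= √(π/r)·e^{−1/(4r)} of the full round cylinder, and (ii) G is eventually strictly
decreasing: there is a₀ > 0 with G′(a) < 0 for a ≥ a₀. -/
theorem stmt_15 (r : ℝ) (hr : 0 < r) :
    Filter.Tendsto (G r) Filter.atTop
        (nhds (Real.sqrt (Real.pi / r) * Real.exp (-1 / (4 * r)))) ∧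
    ((1 / (2 * r)) * (∫ x : ℝ, Real.exp (-(x ^ 2 + 1) / (4 * r)))
        = Real.sqrt (Real.pi / r) * Real.exp (-1 / (4 * r))) ∧
    (∃ a₀ > (0:ℝ), (∀ a ≥ a₀, deriv (G r) a < 0) ∧ StrictAntiOn (G r) (Set.Ici a₀)) := by
  have hexp : ∀ u : ℝ, Real.exp (-(u ^ 2 + 1) / (4 * r))
      = Real.exp (-(1/(4*r)) * u ^ 2) * Real.exp (-(1/(4*r))) := by
    intro u; rw [← Real.exp_add]; ring_nf
  have hc : Continuous (fun u : ℝ => Real.exp (-(u ^ 2 + 1) / (4 * r))) := by fun_prop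
  have hf : Integrable (fun u : ℝ => Real.exp (-(u ^ 2 + 1) / (4 * r))) := by
    simp only [hexp]
    exact (integrable_exp_neg_mul_sq (by positivity)).mul_const _
  -- part (ii): value of the full integral
  have hval : (1 / (2 * r)) * (∫ x : ℝ, Real.exp (-(x ^ 2 + 1) / (4 * r)))
      = Real.sqrt (Real.pi / r) * Real.exp (-1 / (4 * r)) := by
    simp only [hexp]
    rw [MeasureTheory.integral_mul_const, integral_gaussian]
    have h2 : Real.sqrt (Real.pi / (1/(4*r))) = 2*r*Real.sqrt (Real.pi/r) := by
      rw [show Real.pi/(1/(4*r)) = (2*r)^2 * (Real.pi/r) by field_simp; ring,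
        Real.sqrt_mul (by positivity), Real.sqrt_sq (by positivity)]
    rw [h2, show (-1:ℝ)/(4*r) = -(1/(4*r)) by ring]
    field_simp
  -- closed form of the cap integral
  have hclosed : ∀ a : ℝ, a ≠ 0 →
      (∫ x in (0:ℝ)..1, Real.exp (-(a ^ 2 + 2 * a * x + 1) / (4 * r)))
        = (2*r/a) * (Real.exp (-(a^2+1)/(4*r)) - Real.exp (-(a^2+2*a+1)/(4*r))) := by
    intro a ha
    have key : ∀ x ∈ Set.uIcc (0:ℝ) 1,
        HasDerivAt (fun x => -(2*r/a) * Real.exp (-(a^2+2*a*x+1)/(4*r)))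
          (Real.exp (-(a ^ 2 + 2 * a * x + 1) / (4 * r))) x := by
      intro x _
      have h1 : HasDerivAt (fun x : ℝ => -(a^2+2*a*x+1)/(4*r)) (-(2*a)/(4*r)) x := by
        have : HasDerivAt (fun x : ℝ => a^2+2*a*x+1) (2*a) x := by
          simpa using (((hasDerivAt_id x).const_mul (2*a)).const_add (a^2)).add_const 1
        simpa using this.neg.div_const (4*r)
      have := (h1.exp).const_mul (-(2*r/a))
      refine this.congr_deriv ?_
      field_simp
      ring
    rw [intervalIntegral.integral_eq_sub_of_hasDerivAt key
      ((Continuous.intervalIntegrable (by fun_prop) _ _))]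
    ring_nf
  -- decomposition of the Iic integral
  have hIic : ∀ a : ℝ, (∫ u in Set.Iic a, Real.exp (-(u ^ 2 + 1) / (4 * r)))
      = (∫ u in Set.Iic (0:ℝ), Real.exp (-(u ^ 2 + 1) / (4 * r)))
        + ∫ u in (0:ℝ)..a, Real.exp (-(u ^ 2 + 1) / (4 * r)) := by
    intro a
    rw [← intervalIntegral.integral_Iic_sub_Iic hf.integrableOn hf.integrableOn]
    ring
  -- part (i): the limit
  have hT1 : Filter.Tendsto
      (fun a : ℝ => (1 / (2 * r)) * ∫ u in Set.Iic a, Real.exp (-(u ^ 2 + 1) / (4 * r)))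
      Filter.atTop (nhds (Real.sqrt (Real.pi / r) * Real.exp (-1 / (4 * r)))) := by
    rw [← hval]
    apply Filter.Tendsto.const_mul
    have heq : (fun a : ℝ => ∫ u in Set.Iic a, Real.exp (-(u ^ 2 + 1) / (4 * r)))
        = fun a : ℝ => (∫ u in Set.Iic (0:ℝ), Real.exp (-(u ^ 2 + 1) / (4 * r)))
          + ∫ u in (0:ℝ)..a, Real.exp (-(u ^ 2 + 1) / (4 * r)) := funext hIic
    rw [heq]
    have h2 := MeasureTheory.intervalIntegral_tendsto_integral_Ioi 0 hf.integrableOn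
      Filter.tendsto_id
    have := (tendsto_const_nhds
        (x := ∫ u in Set.Iic (0:ℝ), Real.exp (-(u ^ 2 + 1) / (4 * r)))
        (f := Filter.atTop)).add h2
    rwa [intervalIntegral.integral_Iic_add_Ioi hf.integrableOn hf.integrableOn] at this
  have hT2 : Filter.Tendsto
      (fun a : ℝ => (1 / (2 * r)) *
        ∫ x in (0:ℝ)..1, Real.exp (-(a ^ 2 + 2 * a * x + 1) / (4 * r)))
      Filter.atTop (nhds 0) := by
    have hg : Filter.Tendsto (fun a : ℝ => (1 / (2 * r)) * Real.exp (-(a^2+1)/(4*r)))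
        Filter.atTop (nhds ((1 / (2 * r)) * 0)) := by
      apply Filter.Tendsto.const_mul
      apply Real.tendsto_exp_atBot.comp
      apply Filter.Tendsto.atBot_div_const (by positivity)
      apply Filter.tendsto_neg_atBot_iff.mpr
      exact Filter.tendsto_atTop_add_const_right _ 1 (Filter.tendsto_pow_atTop (by norm_num))
    rw [mul_zero] at hg
    apply tendsto_of_tendsto_of_tendsto_of_le_of_le' tendsto_const_nhds hg
    · filter_upwards with a
      have : 0 ≤ ∫ x in (0:ℝ)..1, Real.exp (-(a ^ 2 + 2 * a * x + 1) / (4 * r)) :=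
        intervalIntegral.integral_nonneg (by norm_num) (fun x _ => (Real.exp_pos _).le)
      positivity
    · filter_upwards [Filter.eventually_ge_atTop (0:ℝ)] with a ha
      have hub : (∫ x in (0:ℝ)..1, Real.exp (-(a ^ 2 + 2 * a * x + 1) / (4 * r)))
          ≤ Real.exp (-(a^2+1)/(4*r)) := by
        calc (∫ x in (0:ℝ)..1, Real.exp (-(a ^ 2 + 2 * a * x + 1) / (4 * r)))
            ≤ ∫ _ in (0:ℝ)..1, Real.exp (-(a^2+1)/(4*r)) := by
              apply intervalIntegral.integral_mono_on (by norm_num)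
                ((Continuous.intervalIntegrable (by fun_prop) _ _)) (by simp)
              intro x hx
              apply Real.exp_le_exp.mpr
              apply div_le_div_of_nonneg_right ?_ (by positivity) |>.trans_eq rfl
              · nlinarith [hx.1, hx.2]
          _ = Real.exp (-(a^2+1)/(4*r)) := by simp
      have h2r : (0:ℝ) < 1/(2*r) := by positivity
      exact mul_le_mul_of_nonneg_left hub h2r.le
  have hTendsto : Filter.Tendsto (G r) Filter.atTop
      (nhds (Real.sqrt (Real.pi / r) * Real.exp (-1 / (4 * r)))) := by
    have := hT1.add hT2
    rw [add_zero] at this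
    exact this
  refine ⟨hTendsto, hval, ?_⟩
  -- part (iii): eventual strict decrease
  -- the derivative of G at a > 0
  set Ghat : ℝ → ℝ := fun b =>
    (1 / (2 * r)) * ((∫ u in Set.Iic (0:ℝ), Real.exp (-(u ^ 2 + 1) / (4 * r)))
      + ∫ u in (0:ℝ)..b, Real.exp (-(u ^ 2 + 1) / (4 * r)))
    + (Real.exp (-(b^2+1)/(4*r)) - Real.exp (-(b^2+2*b+1)/(4*r)))/b with hGhat
  have hGeq : ∀ b : ℝ, b ≠ 0 → G r b = Ghat b := by
    intro b hb
    rw [hGhat]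
    simp only [G]
    rw [hclosed b hb, hIic b]
    field_simp
  set D : ℝ → ℝ := fun a =>
    (1 / (2 * r)) * Real.exp (-(a ^ 2 + 1) / (4 * r))
    + ((Real.exp (-(a^2+1)/(4*r)) * (-(2*a)/(4*r))
        - Real.exp (-(a^2+2*a+1)/(4*r)) * (-(2*a+2)/(4*r))) * a
        - (Real.exp (-(a^2+1)/(4*r)) - Real.exp (-(a^2+2*a+1)/(4*r))) * 1) / a^2 with hD
  have hderiv : ∀ a : ℝ, 0 < a → HasDerivAt (G r) (D a) a := by
    intro a ha
    have hGhatDeriv : HasDerivAt Ghat (D a) a := by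
      have t1 : HasDerivAt (fun b => (1 / (2 * r)) *
          ((∫ u in Set.Iic (0:ℝ), Real.exp (-(u ^ 2 + 1) / (4 * r)))
            + ∫ u in (0:ℝ)..b, Real.exp (-(u ^ 2 + 1) / (4 * r))))
          ((1 / (2 * r)) * Real.exp (-(a ^ 2 + 1) / (4 * r))) a :=
        ((intervalIntegral.integral_hasDerivAt_right (hf.intervalIntegrable)
          hc.aestronglyMeasurable.stronglyMeasurableAtFilter hc.continuousAt).const_add
          _).const_mul _
      have h1 : HasDerivAt (fun b : ℝ => Real.exp (-(b^2+1)/(4*r)))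
          (Real.exp (-(a^2+1)/(4*r)) * (-(2*a)/(4*r))) a := by
        have hi : HasDerivAt (fun b : ℝ => -(b^2+1)/(4*r)) (-(2*a)/(4*r)) a := by
          have : HasDerivAt (fun b : ℝ => b^2+1) (2*a) a := by
            simpa using (hasDerivAt_pow 2 a).add_const 1
          simpa using this.neg.div_const (4*r)
        exact hi.exp
      have h2 : HasDerivAt (fun b : ℝ => Real.exp (-(b^2+2*b+1)/(4*r)))
          (Real.exp (-(a^2+2*a+1)/(4*r)) * (-(2*a+2)/(4*r))) a := by
        have hi : HasDerivAt (fun b : ℝ => -(b^2+2*b+1)/(4*r)) (-(2*a+2)/(4*r)) a := by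
          have : HasDerivAt (fun b : ℝ => b^2+2*b+1) (2*a+2) a := by
            simpa using ((hasDerivAt_pow 2 a).add ((hasDerivAt_id a).const_mul 2)).add_const 1
          simpa using this.neg.div_const (4*r)
        exact hi.exp
      have t2 := (h1.sub h2).div (hasDerivAt_id a) ha.ne'
      exact t1.add t2
    apply hGhatDeriv.congr_of_eventuallyEq
    filter_upwards [eventually_ne_nhds ha.ne'] with b hb
    exact hGeq b hb
  -- negativity of the derivative
  have hDneg : ∀ a : ℝ, 1 ≤ a → 25 * r^2 ≤ a → D a < 0 := by
    intro a ha1 ha2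
    have ha : (0:ℝ) < a := lt_of_lt_of_le one_pos ha1
    have hφ : Real.exp (-(a^2+1)/(4*r))
        = Real.exp (-(a^2+2*a+1)/(4*r)) * Real.exp (a/(2*r)) := by
      rw [← Real.exp_add]; congr 1; field_simp; ring
    have hDeq : D a = (Real.exp (-(a^2+2*a+1)/(4*r))
        * ((1 + (2*a^2+2*a)/(4*r)) - Real.exp (a/(2*r)))) / a^2 := by
      rw [hD]
      simp only
      rw [show -(a ^ 2 + 1) / (4 * r) = -(a^2+1)/(4*r) by norm_num, hφ]
      field_simp
      ring
    rw [hDeq]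
    apply div_neg_of_neg_of_pos _ (by positivity)
    apply mul_neg_of_pos_of_neg (Real.exp_pos _)
    have := aux_key_ineq r a hr ha1 ha2
    linarith
  refine ⟨max 1 (25 * r^2), lt_of_lt_of_le one_pos (le_max_left _ _), ?_, ?_⟩
  · intro a haa
    have ha1 : 1 ≤ a := le_trans (le_max_left _ _) haa
    have ha2 : 25 * r^2 ≤ a := le_trans (le_max_right _ _) haa
    rw [(hderiv a (lt_of_lt_of_le one_pos ha1)).deriv]
    exact hDneg a ha1 ha2
  · apply strictAntiOn_of_deriv_neg (convex_Ici _)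
    · intro x hx
      have hx1 : 1 ≤ x := le_trans (le_max_left _ _) hx
      exact ((hderiv x (lt_of_lt_of_le one_pos hx1)).continuousAt).continuousWithinAt
    · intro x hx
      rw [interior_Ici] at hx
      have hx1 : 1 < x := lt_of_le_of_lt (le_max_left _ _) hx
      have hx2 : 25 * r^2 ≤ x := le_of_lt (lt_of_le_of_lt (le_max_right _ _) hx)
      rw [(hderiv x (lt_trans one_pos hx1)).deriv]
      exact hDneg x hx1.le hx2
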